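/- There exists a constant C > 0 such that for every real k ≥ 1 and every real s ≥ 0, one has h_k(s)² ≤ C·(1 + |g_k(s)|). -/

import Mathlib

open Real intervalIntegral

/-- Truncation `T_k(s) = max(0, min(k, s))`. -/
noncomputable def Tk (k s : ℝ) : ℝ := max 0 (min k s)

/-- `g_k(s) = ∫₀ˢ (∫₁ʸ dz / T_k(z)) dy`. -/
noncomputable def gk (k s : ℝ) : ℝ := ∫ y in (0:ℝ)..s, ∫ z in (1:ℝ)..y, 1 / Tk k z

/-- `h_k(s) = ∫₀ˢ dz / √(T_k(z))`. -/
noncomputable def hk (k s : ℝ) : ℝ := ∫ z in (0:ℝ)..s, 1 / Real.sqrt (Tk k z)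


lemma Tk_eq_self {k z : ℝ} (h0 : 0 ≤ z) (hzk : z ≤ k) : Tk k z = z := by
  simp [Tk, min_eq_right hzk, max_eq_right h0]

lemma Tk_eq_k {k z : ℝ} (h0 : 0 ≤ k) (hkz : k ≤ z) : Tk k z = k := by
  simp [Tk, min_eq_left hkz, max_eq_right h0]

-- hk piece on [0, min s k]: equals z^(-1/2) on uIcc
lemma hk_inte_eqon {k s : ℝ} (hs : 0 ≤ s) (hsk : s ≤ k) :
    Set.EqOn (fun z => 1 / Real.sqrt (Tk k z)) (fun z => z ^ (-1/2 : ℝ)) (Set.uIcc 0 s) := by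
  intro z hz
  rw [Set.uIcc_of_le hs] at hz
  obtain ⟨h0, h1⟩ := hz
  simp only
  rcases eq_or_lt_of_le h0 with h | h
  · rw [← h]
    simp [Tk, Real.zero_rpow (show (-1/2:ℝ) ≠ 0 by norm_num)]
  · rw [Tk_eq_self h0 (h1.trans hsk), Real.sqrt_eq_rpow,
      one_div, ← Real.rpow_neg h0]
    norm_num

lemma hk_low {k s : ℝ} (hs : 0 ≤ s) (hsk : s ≤ k) :
    (∫ z in (0:ℝ)..s, 1 / Real.sqrt (Tk k z)) = 2 * Real.sqrt s := by
  rw [intervalIntegral.integral_congr (hk_inte_eqon hs hsk),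
    integral_rpow (Or.inl (by norm_num))]
  rw [Real.zero_rpow (by norm_num), Real.sqrt_eq_rpow]
  norm_num
  ring

lemma hk_intble_low {k s : ℝ} (hs : 0 ≤ s) (hsk : s ≤ k) :
    IntervalIntegrable (fun z => 1 / Real.sqrt (Tk k z)) MeasureTheory.volume 0 s := by
  rw [intervalIntegrable_iff, Set.uIoc_of_le hs]
  have h1 := (intervalIntegral.intervalIntegrable_rpow'
    (show (-1:ℝ) < -1/2 by norm_num) (a := 0) (b := s)).1
  exact h1.congr_fun
    (fun z hz => (hk_inte_eqon hs hsk ((Set.uIcc_of_le hs).symm ▸ ⟨le_of_lt hz.1, hz.2⟩)).symm)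
    measurableSet_Ioc

lemma IntervalIntegrable.congr_eqOn {f g : ℝ → ℝ} {a b : ℝ}
    (hf : IntervalIntegrable f MeasureTheory.volume a b)
    (h : Set.EqOn f g (Set.uIcc a b)) : IntervalIntegrable g MeasureTheory.volume a b := by
  rw [intervalIntegrable_iff] at *
  exact hf.congr_fun (fun z hz => h (Set.uIoc_subset_uIcc hz)) measurableSet_Ioc

lemma hk_high {k s : ℝ} (hk0 : 0 < k) (hks : k ≤ s) :
    (∫ z in (0:ℝ)..s, 1 / Real.sqrt (Tk k z))
      = 2 * Real.sqrt k + (s - k) / Real.sqrt k := by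
  have e1 : Set.EqOn (fun _ : ℝ => 1 / Real.sqrt k) (fun z => 1 / Real.sqrt (Tk k z))
      (Set.uIcc k s) := by
    intro z hz
    rw [Set.uIcc_of_le hks] at hz
    simp only [Tk_eq_k hk0.le hz.1]
  rw [← intervalIntegral.integral_add_adjacent_intervals (b := k)
      (hk_intble_low hk0.le le_rfl)
      ((_root_.intervalIntegrable_const).congr_eqOn e1),
    hk_low hk0.le le_rfl, ← intervalIntegral.integral_congr e1,
    intervalIntegral.integral_const, smul_eq_mul]
  ring

lemma abs_log_le {y : ℝ} (hy : 0 < y) : |Real.log y| ≤ y + 2 * y ^ (-1/2 : ℝ) := by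
  have hr : (0:ℝ) ≤ y ^ (-1/2 : ℝ) := Real.rpow_nonneg hy.le _
  rcases le_or_gt 1 y with h | h
  · rw [abs_of_nonneg (Real.log_nonneg h)]
    have := Real.log_le_sub_one_of_pos hy
    linarith
  · rw [abs_of_nonpos (Real.log_nonpos hy.le h.le)]
    have h1 := Real.log_le_sub_one_of_pos (Real.rpow_pos_of_pos hy (-1/2 : ℝ))
    rw [Real.log_rpow hy] at h1
    nlinarith

lemma intble_log {s : ℝ} (hs : 0 ≤ s) :
    IntervalIntegrable Real.log MeasureTheory.volume 0 s := by
  apply IntervalIntegrable.mono_fun'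
    (g := fun y : ℝ => y + 2 * y ^ (-1/2 : ℝ))
    (intervalIntegrable_id.add ((intervalIntegral.intervalIntegrable_rpow'
      (show (-1:ℝ) < -1/2 by norm_num)).const_mul 2))
    (Real.measurable_log.aestronglyMeasurable)
  rw [Filter.EventuallyLE, MeasureTheory.ae_restrict_iff' measurableSet_uIoc]
  refine MeasureTheory.ae_of_all _ fun y hy => ?_
  rw [Set.uIoc_of_le hs] at hy
  simpa [Real.norm_eq_abs] using abs_log_le hy.1

lemma integral_log_from_zero' {s : ℝ} (hs : 0 ≤ s) :
    (∫ y in (0:ℝ)..s, Real.log y) = s * Real.log s - s := by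
  rcases eq_or_lt_of_le hs with h | h
  · simp [← h]
  · rw [intervalIntegral.integral_eq_sub_of_hasDerivAt_of_le hs
      (f := fun x => x * Real.log x - x)
      ((Real.continuous_mul_log.sub continuous_id).continuousOn)
      (fun x hx => by
        exact ((Real.hasDerivAt_mul_log (ne_of_gt hx.1)).sub (hasDerivAt_id x)).congr_deriv (by simp))
      (intble_log hs)]
    simp

lemma inner_eqon_low {k y : ℝ} (hk1 : 1 ≤ k) (hy : 0 < y) (hyk : y ≤ k) :
    Set.EqOn (fun z => 1 / z) (fun z => 1 / Tk k z) (Set.uIcc 1 y) := by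
  intro z hz
  have hz0 : 0 < z := lt_of_lt_of_le (lt_min zero_lt_one hy) hz.1
  have hzk : z ≤ k := le_trans hz.2 (max_le hk1 hyk)
  simp only [Tk_eq_self hz0.le hzk]

lemma inner_low {k y : ℝ} (hk1 : 1 ≤ k) (hy : 0 < y) (hyk : y ≤ k) :
    (∫ z in (1:ℝ)..y, 1 / Tk k z) = Real.log y := by
  rw [← intervalIntegral.integral_congr (inner_eqon_low hk1 hy hyk),
    integral_one_div (by
      rw [Set.mem_uIcc]
      push_neg
      constructor <;> intro h <;> linarith [hy, @zero_lt_one ℝ _ _])]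
  simp

lemma inner_intble_low {k y : ℝ} (hk1 : 1 ≤ k) (hy : 0 < y) (hyk : y ≤ k) :
    IntervalIntegrable (fun z => 1 / Tk k z) MeasureTheory.volume 1 y := by
  refine IntervalIntegrable.congr_eqOn ?_ (inner_eqon_low hk1 hy hyk)
  apply ContinuousOn.intervalIntegrable
  apply ContinuousOn.div continuousOn_const continuousOn_id
  intro x hx
  exact ne_of_gt (lt_of_lt_of_le (lt_min zero_lt_one hy) hx.1)

lemma inner_high {k y : ℝ} (hk1 : 1 ≤ k) (hky : k ≤ y) :
    (∫ z in (1:ℝ)..y, 1 / Tk k z) = Real.log k + (y - k) / k := by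
  have hk0 : (0:ℝ) < k := lt_of_lt_of_le zero_lt_one hk1
  have e1 : Set.EqOn (fun _ : ℝ => 1 / k) (fun z => 1 / Tk k z) (Set.uIcc k y) := by
    intro z hz
    rw [Set.uIcc_of_le hky] at hz
    simp only [Tk_eq_k hk0.le hz.1]
  rw [← intervalIntegral.integral_add_adjacent_intervals (b := k)
      (inner_intble_low hk1 hk0 le_rfl)
      ((_root_.intervalIntegrable_const).congr_eqOn e1),
    inner_low hk1 hk0 le_rfl, ← intervalIntegral.integral_congr e1,
    intervalIntegral.integral_const, smul_eq_mul]
  ring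

lemma gk_eq_ae {k s : ℝ} (hk1 : 1 ≤ k) (hs : 0 ≤ s) (hsk : s ≤ k) :
    (∫ y in (0:ℝ)..s, ∫ z in (1:ℝ)..y, 1 / Tk k z) = ∫ y in (0:ℝ)..s, Real.log y := by
  apply intervalIntegral.integral_congr_ae
  refine MeasureTheory.ae_of_all _ fun y hy => ?_
  rw [Set.uIoc_of_le hs] at hy
  exact inner_low hk1 hy.1 (hy.2.trans hsk)

lemma gk_low {k s : ℝ} (hk1 : 1 ≤ k) (hs : 0 ≤ s) (hsk : s ≤ k) :
    (∫ y in (0:ℝ)..s, ∫ z in (1:ℝ)..y, 1 / Tk k z) = s * Real.log s - s := by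
  rw [gk_eq_ae hk1 hs hsk, integral_log_from_zero' hs]

lemma gk_intble_low {k s : ℝ} (hk1 : 1 ≤ k) (hs : 0 ≤ s) (hsk : s ≤ k) :
    IntervalIntegrable (fun y => ∫ z in (1:ℝ)..y, 1 / Tk k z) MeasureTheory.volume 0 s := by
  rw [intervalIntegrable_iff, Set.uIoc_of_le hs]
  exact (intble_log hs).1.congr_fun
    (fun y hy => (inner_low hk1 hy.1 (hy.2.trans hsk)).symm) measurableSet_Ioc

lemma gk_high {k s : ℝ} (hk1 : 1 ≤ k) (hks : k ≤ s) :
    (∫ y in (0:ℝ)..s, ∫ z in (1:ℝ)..y, 1 / Tk k z)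
      = (k * Real.log k - k) + ((s - k) * Real.log k + (s - k) ^ 2 / (2 * k)) := by
  have hk0 : (0:ℝ) < k := lt_of_lt_of_le zero_lt_one hk1
  have e1 : Set.EqOn (fun y : ℝ => Real.log k + (y - k) / k)
      (fun y => ∫ z in (1:ℝ)..y, 1 / Tk k z) (Set.uIcc k s) := by
    intro y hy
    rw [Set.uIcc_of_le hks] at hy
    exact (inner_high hk1 hy.1).symm
  have hGc : Continuous (fun y : ℝ => Real.log k + (y - k) / k) :=
    continuous_const.add ((continuous_id.sub continuous_const).div_const k)
  have hd : ∀ x ∈ Set.uIcc k s,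
      HasDerivAt (fun y : ℝ => y * Real.log k + (y - k) ^ 2 / (2 * k))
        (Real.log k + (x - k) / k) x := by
    intro x _
    have h1 : HasDerivAt (fun y : ℝ => y * Real.log k) (Real.log k) x := by
      simpa using (hasDerivAt_id x).mul_const (Real.log k)
    have h2 : HasDerivAt (fun y : ℝ => (y - k) ^ 2 / (2 * k)) ((x - k) / k) x := by
      have h3 := (((hasDerivAt_id x).sub_const k).pow 2).div_const (2 * k)
      refine h3.congr_deriv ?_
      simp only [id]
      field_simp
      ring
    exact h1.add h2
  rw [← intervalIntegral.integral_add_adjacent_intervals (b := k)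
      (gk_intble_low hk1 hk0.le le_rfl)
      (hGc.intervalIntegrable k s |>.congr_eqOn e1),
    gk_low hk1 hk0.le le_rfl, ← intervalIntegral.integral_congr e1,
    intervalIntegral.integral_eq_sub_of_hasDerivAt hd (hGc.intervalIntegrable k s)]
  ring

lemma log_ge_three {x : ℝ} (hx : 50 ≤ x) : 3 ≤ Real.log x := by
  have h0 : (0:ℝ) < x := by linarith
  rw [Real.le_log_iff_exp_le h0]
  have he : Real.exp 3 = Real.exp 1 * Real.exp 1 * Real.exp 1 := by
    rw [← Real.exp_add, ← Real.exp_add]; norm_num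
  nlinarith [Real.exp_one_lt_d9, Real.exp_pos 1]

theorem stmt_4 :
    ∃ C : ℝ, 0 < C ∧ ∀ k : ℝ, 1 ≤ k → ∀ s : ℝ, 0 ≤ s →
      (hk k s) ^ 2 ≤ C * (1 + |gk k s|) := by
  refine ⟨700, by norm_num, fun k hk1 s hs => ?_⟩
  have hk0 : (0:ℝ) < k := lt_of_lt_of_le zero_lt_one hk1
  rcases le_or_gt s k with hsk | hks
  · -- s ≤ k
    rw [show hk k s = 2 * Real.sqrt s from hk_low hs hsk,
      show gk k s = s * Real.log s - s from gk_low hk1 hs hsk]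
    have hsq : Real.sqrt s ^ 2 = s := Real.sq_sqrt hs
    have habs : |s * Real.log s - s| ≥ 0 := abs_nonneg _
    have habs2 : s * Real.log s - s ≤ |s * Real.log s - s| := le_abs_self _
    rcases le_or_gt s 50 with h50 | h50
    · nlinarith
    · have hlog : 3 ≤ Real.log s := log_ge_three h50.le
      nlinarith
  · -- k < s
    rw [show hk k s = 2 * Real.sqrt k + (s - k) / Real.sqrt k from hk_high hk0 hks.le,
      show gk k s = (k * Real.log k - k) + ((s - k) * Real.log k + (s - k) ^ 2 / (2 * k))
        from gk_high hk1 hks.le]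
    set r := Real.sqrt k with hr
    set t := s - k with ht
    clear_value r t
    have ht0 : 0 ≤ t := by simp [ht]; linarith
    have hrpos : 0 < r := hr ▸ Real.sqrt_pos.mpr hk0
    have hrk : r ^ 2 = k := hr ▸ Real.sq_sqrt hk0.le
    have hL : 0 ≤ Real.log k := Real.log_nonneg hk1
    set g := (k * Real.log k - k) + (t * Real.log k + t ^ 2 / (2 * k)) with hg
    clear_value g
    have habs : 0 ≤ |g| := abs_nonneg _
    have habs2 : g ≤ |g| := le_abs_self _
    have hexp : (2 * r + t / r) ^ 2 = 4 * k + 4 * t + t ^ 2 / k := by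
      rw [← hrk]; field_simp; ring
    rw [hexp]
    have hq : 0 ≤ t ^ 2 / k := div_nonneg (sq_nonneg t) hk0.le
    have hdiv : t ^ 2 / (2 * k) = (t ^ 2 / k) / 2 := by
      rw [div_div]; ring_nf
    have hglb : t ^ 2 / k ≤ 2 * |g| + 2 * k := by
      have h1 : t ^ 2 / (2 * k) - k ≤ g := by
        nlinarith [mul_nonneg hk0.le hL, mul_nonneg ht0 hL]
      rw [hdiv] at h1
      linarith [habs2, h1]
    rcases le_or_gt k 50 with h50 | h50
    · have hc : t ^ 2 / 50 ≤ t ^ 2 / k :=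
        div_le_div_of_nonneg_left (sq_nonneg t) hk0 h50
      have h4t : 4 * t ≤ t ^ 2 / 25 + 100 := by
        nlinarith [sq_nonneg (t - 50)]
      have hc2 : t ^ 2 / 25 = 2 * (t ^ 2 / 50) := by ring
      nlinarith [hglb, h4t, hc, habs]
    · have hlog : 3 ≤ Real.log k := log_ge_three h50.le
      have hgl : 2 * k + 3 * t + t ^ 2 / (2 * k) ≤ g := by
        nlinarith [mul_nonneg ht0 (sub_nonneg.mpr hlog)]
      rw [hdiv] at hgl
      nlinarith [hgl, habs2, habs, hq]
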